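/- Let G = (V, E, w) be a finite connected undirected weighted graph with all edge weights in [0, B], B > 0, and let e′ be an unordered pair of vertices with e′ ∉ E, assigned a weight w(e′) ∈ [0, B]. Let f denote the minimum spanning tree weight. Then 0 ≤ f(G) − f(G + e′) ≤ B, where G + e′ = (V, E ∪ {e′}) with the given weight on e′. In particular, the MST weight is monotone non-increasing under edge addition and decreases by at most B. -/

import Mathlib

/-- The total weight of (the edges of) a graph `T` on a finite vertex set,
with edge weights `w`. -/
noncomputable def treeWeight {V : Type*} [Fintype V] (T : SimpleGraph V) (w : Sym2 V → ℝ) : ℝ :=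
  ∑ e ∈ (Set.toFinite T.edgeSet).toFinset, w e

/-- The minimum spanning tree weight of a graph `G`: the infimum, over spanning trees of `G`
(connected acyclic subgraphs on all vertices), of the total edge weight. -/
noncomputable def mstWeight {V : Type*} [Fintype V] (G : SimpleGraph V) (w : Sym2 V → ℝ) : ℝ :=
  sInf ((fun T => treeWeight T w) '' {T : SimpleGraph V | T ≤ G ∧ T.IsTree})

section Aux

open SimpleGraph

variable {V : Type*}

/-- Splitting reachability in `H` according to use of the edge `s(u,v)`. -/
lemma aux_reach_split {H : SimpleGraph V} {u v x y : V} (h : H.Reachable x y) :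
    (H \ fromEdgeSet {s(u,v)}).Reachable x y ∨
      ((H \ fromEdgeSet {s(u,v)}).Reachable x u ∧ (H \ fromEdgeSet {s(u,v)}).Reachable v y) ∨
      ((H \ fromEdgeSet {s(u,v)}).Reachable x v ∧ (H \ fromEdgeSet {s(u,v)}).Reachable u y) := by
  obtain ⟨p⟩ := h
  induction p with
  | nil => exact Or.inl (Reachable.refl _)
  | @cons a b c hab p ih =>
    by_cases he : s(a, b) = s(u, v)
    · rw [Sym2.eq_iff] at he
      rcases he with ⟨rfl, rfl⟩ | ⟨rfl, rfl⟩
      · rcases ih with h1 | ⟨h2a, h2b⟩ | ⟨_, h3b⟩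
        · exact Or.inr (Or.inl ⟨Reachable.refl _, h1⟩)
        · exact Or.inl (h2a.symm.trans h2b)
        · exact Or.inl h3b
      · rcases ih with h1 | ⟨_, h2b⟩ | ⟨h3a, h3b⟩
        · exact Or.inr (Or.inr ⟨Reachable.refl _, h1⟩)
        · exact Or.inl h2b
        · exact Or.inl (h3a.symm.trans h3b)
    · have hFadj : (H \ fromEdgeSet {s(u,v)}).Adj a b := by
        rw [sdiff_adj, fromEdgeSet_adj]
        exact ⟨hab, fun hc => he hc.1⟩
      rcases ih with h1 | ⟨h2a, h2b⟩ | ⟨h3a, h3b⟩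
      · exact Or.inl (hFadj.reachable.trans h1)
      · exact Or.inr (Or.inl ⟨hFadj.reachable.trans h2a, h2b⟩)
      · exact Or.inr (Or.inr ⟨hFadj.reachable.trans h3a, h3b⟩)

lemma aux_reach_of_del {H : SimpleGraph V} {u v : V}
    (huv : (H \ fromEdgeSet {s(u,v)}).Reachable u v) {x y : V} (h : H.Reachable x y) :
    (H \ fromEdgeSet {s(u,v)}).Reachable x y := by
  rcases aux_reach_split (u := u) (v := v) h with h1 | ⟨h2a, h2b⟩ | ⟨h3a, h3b⟩
  · exact h1
  · exact (h2a.trans huv).trans h2b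
  · exact (h3a.trans huv.symm).trans h3b

lemma aux_reach_endpoint {H : SimpleGraph V} {u v : V} (hc : H.Preconnected) (x : V) :
    (H \ fromEdgeSet {s(u,v)}).Reachable x u ∨ (H \ fromEdgeSet {s(u,v)}).Reachable x v := by
  rcases aux_reach_split (u := u) (v := v) (hc x u) with h1 | ⟨h2a, _⟩ | ⟨h3a, _⟩
  · exact Or.inl h1
  · exact Or.inl h2a
  · exact Or.inr h3a

lemma aux_isAcyclic_mono {G H : SimpleGraph V} (h : G ≤ H) (hH : H.IsAcyclic) :
    G.IsAcyclic := fun _ c hc => hH (c.mapLe h) (hc.mapLe h)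

/-- Every connected graph on a finite vertex set has a spanning tree. -/
lemma aux_exists_spanning_tree [Fintype V] :
    ∀ (n : ℕ) (H : SimpleGraph V), (Set.toFinite H.edgeSet).toFinset.card ≤ n →
      H.Connected → ∃ T, T ≤ H ∧ T.IsTree := by
  intro n
  induction n with
  | zero =>
    intro H hcard hc
    have hbot : H = ⊥ := by
      rw [← SimpleGraph.edgeSet_eq_empty]
      have h0 : (Set.toFinite H.edgeSet).toFinset = ∅ :=
        Finset.card_eq_zero.mp (Nat.le_zero.mp hcard)
      exact Set.Finite.toFinset_eq_empty.mp h0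
    exact ⟨H, le_refl _, hc, hbot ▸ isAcyclic_bot⟩
  | succ n ih =>
    intro H hcard hc
    by_cases hac : H.IsAcyclic
    · exact ⟨H, le_refl _, hc, hac⟩
    · rw [isAcyclic_iff_forall_adj_isBridge] at hac
      push_neg at hac
      obtain ⟨a, b, hab, hnb⟩ := hac
      rw [isBridge_iff] at hnb
      push_neg at hnb
      have hreach : (H \ fromEdgeSet {s(a,b)}).Reachable a b := hnb
      set H' := H \ fromEdgeSet {s(a,b)} with hH'
      have hconn' : H'.Connected := by
        haveI : Nonempty V := hc.nonempty
        exact Connected.mk (fun x y => aux_reach_of_del hreach (hc.preconnected x y))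
      have hE' : H'.edgeSet = H.edgeSet \ {s(a,b)} := by
        rw [hH', edgeSet_sdiff, edgeSet_fromEdgeSet, edgeSet_sdiff_sdiff_isDiag]
      have hmem : s(a,b) ∈ H.edgeSet := hab
      have hcard' : (Set.toFinite H'.edgeSet).toFinset.card ≤ n := by
        have hss : (Set.toFinite H'.edgeSet).toFinset ⊆ (Set.toFinite H.edgeSet).toFinset := by
          intro e he
          simp only [Set.Finite.mem_toFinset] at he ⊢
          rw [hE'] at he
          exact he.1
        have hnm : s(a,b) ∉ (Set.toFinite H'.edgeSet).toFinset := by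
          simp [hE']
        have : (Set.toFinite H'.edgeSet).toFinset.card <
            (Set.toFinite H.edgeSet).toFinset.card := by
          refine Finset.card_lt_card ⟨hss, fun hsub => hnm (hsub ?_)⟩
          simp [hmem]
        omega
      obtain ⟨T, hT1, hT2⟩ := ih H' hcard' hconn'
      exact ⟨T, hT1.trans sdiff_le, hT2⟩

/-- Adding an edge between two components of an acyclic graph keeps it acyclic. -/
lemma aux_acyclic_add {F : SimpleGraph V} (hF : F.IsAcyclic) {x y : V} (hxy : x ≠ y)
    (hnr : ¬ F.Reachable x y) : (F ⊔ fromEdgeSet {s(x,y)}).IsAcyclic := by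
  have hxyE : s(x,y) ∉ F.edgeSet := fun h => hnr (Adj.reachable h)
  rw [isAcyclic_iff_forall_adj_isBridge]
  intro a b hab
  rw [isBridge_iff]
  show ¬ ((F ⊔ fromEdgeSet {s(x,y)}) \ fromEdgeSet {s(a,b)}).Reachable a b
  rcases (sup_adj _ _ _ _).mp hab with hFab | hEab
  · -- edge of `F`
    have hbr : ¬ (F \ fromEdgeSet {s(a,b)}).Reachable a b :=
      ((isBridge_iff).mp (isAcyclic_iff_forall_adj_isBridge.mp hF hFab))
    have hne : s(a,b) ≠ s(x,y) := fun h => hxyE (h ▸ (mem_edgeSet F).mpr hFab)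
    have heq : (F ⊔ fromEdgeSet {s(x,y)}) \ fromEdgeSet {s(a,b)} =
        (F \ fromEdgeSet {s(a,b)}) ⊔ fromEdgeSet {s(x,y)} := by
      ext c d
      simp only [sdiff_adj, sup_adj, fromEdgeSet_adj, Set.mem_singleton_iff]
      have h1 : s(c,d) = s(x,y) → s(c,d) ≠ s(a,b) := fun h h' => hne (h'.symm.trans h)
      tauto
    rw [heq]
    intro hr
    have heq2 : ((F \ fromEdgeSet {s(a,b)}) ⊔ fromEdgeSet {s(x,y)}) \ fromEdgeSet {s(x,y)} =
        F \ fromEdgeSet {s(a,b)} := by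
      ext c d
      simp only [sdiff_adj, sup_adj, fromEdgeSet_adj, Set.mem_singleton_iff]
      have h1 : F.Adj c d → s(c,d) ≠ s(x,y) := fun h h' => hxyE (h' ▸ (mem_edgeSet F).mpr h)
      tauto
    rcases aux_reach_split (u := x) (v := y) hr with h1 | ⟨h2a, h2b⟩ | ⟨h3a, h3b⟩
    · rw [heq2] at h1; exact hbr h1
    · rw [heq2] at h2a h2b
      have hFle : F \ fromEdgeSet {s(a,b)} ≤ F := sdiff_le
      exact hnr (((h2a.mono hFle).symm.trans (Adj.reachable hFab)).trans (h2b.mono hFle).symm)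
    · rw [heq2] at h3a h3b
      have hFle : F \ fromEdgeSet {s(a,b)} ≤ F := sdiff_le
      exact hnr (((h3b.mono hFle).trans (Adj.reachable hFab).symm).trans (h3a.mono hFle))
  · -- the new edge
    rw [fromEdgeSet_adj, Set.mem_singleton_iff] at hEab
    obtain ⟨hmem, hcd⟩ := hEab
    have heq : (F ⊔ fromEdgeSet {s(x,y)}) \ fromEdgeSet {s(a,b)} = F := by
      ext c d
      simp only [sdiff_adj, sup_adj, fromEdgeSet_adj, Set.mem_singleton_iff, hmem]
      have h1 : F.Adj c d → s(c,d) ≠ s(x,y) := fun h h' => hxyE (h' ▸ (mem_edgeSet F).mpr h)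
      have h2 : F.Adj c d → c ≠ d := fun h => h.ne
      tauto
    rw [heq]
    rw [Sym2.eq_iff] at hmem
    rcases hmem with ⟨rfl, rfl⟩ | ⟨rfl, rfl⟩
    · exact hnr
    · exact fun h => hnr h.symm

/-- Finding a crossing edge along a walk. -/
lemma aux_exists_cross {G F : SimpleGraph V} {u : V} :
    ∀ {a b : V} (_ : G.Walk a b), F.Reachable u a → ¬ F.Reachable u b →
      ∃ x y, G.Adj x y ∧ F.Reachable u x ∧ ¬ F.Reachable u y := by
  intro a b p
  induction p with
  | nil => exact fun h1 h2 => absurd h1 h2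
  | @cons a c b hac _ ih =>
    intro h1 h2
    by_cases hc : F.Reachable u c
    · exact ih hc h2
    · exact ⟨a, c, hac, h1, hc⟩

end Aux

/-- Adding one edge `{u,v} ∉ E` with weight in `[0,B]` to a finite connected weighted graph
with weights in `[0,B]` can only decrease the MST weight, and decreases it by at most `B`. -/
theorem stmt4 {V : Type*} [Fintype V] (B : ℝ) (hB : 0 < B)
    (G : SimpleGraph V) (w : Sym2 V → ℝ) (hconn : G.Connected)
    (hw : ∀ e ∈ G.edgeSet, w e ∈ Set.Icc (0 : ℝ) B)
    (u v : V) (huv : u ≠ v) (he : s(u, v) ∉ G.edgeSet)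
    (hwe : w s(u, v) ∈ Set.Icc (0 : ℝ) B) :
    0 ≤ mstWeight G w - mstWeight (G ⊔ SimpleGraph.fromEdgeSet {s(u, v)}) w ∧
      mstWeight G w - mstWeight (G ⊔ SimpleGraph.fromEdgeSet {s(u, v)}) w ≤ B := by
  classical
  open SimpleGraph in
  set G' := G ⊔ SimpleGraph.fromEdgeSet {s(u, v)} with hG'
  set S : Set (SimpleGraph V) := {T | T ≤ G ∧ T.IsTree} with hS
  set S' : Set (SimpleGraph V) := {T | T ≤ G' ∧ T.IsTree} with hS'
  have hGle : G ≤ G' := le_sup_left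
  have hSS' : S ⊆ S' := fun T hT => ⟨hT.1.trans hGle, hT.2⟩
  have hE' : G'.edgeSet = insert s(u,v) G.edgeSet := by
    rw [hG', SimpleGraph.edgeSet_sup, SimpleGraph.edgeSet_fromEdgeSet]
    have : ({s(u,v)} : Set (Sym2 V)) \ Sym2.diagSet = {s(u,v)} := by
      ext e
      simp only [Set.mem_diff, Set.mem_singleton_iff, Set.mem_setOf_eq, Sym2.mem_diagSet]
      constructor
      · exact fun h => h.1
      · rintro rfl; exact ⟨rfl, by simp [Sym2.isDiag_iff_proj_eq, huv]⟩
    rw [this, Set.union_comm, Set.insert_eq]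
  have hw' : ∀ e ∈ G'.edgeSet, w e ∈ Set.Icc (0 : ℝ) B := by
    intro e heG'
    rw [hE'] at heG'
    rcases heG' with rfl | heG
    · exact hwe
    · exact hw e heG
  -- nonemptiness and boundedness
  obtain ⟨T₀, hT₀le, hT₀⟩ := aux_exists_spanning_tree _ G (le_refl _) hconn
  have hSne : S.Nonempty := ⟨T₀, hT₀le, hT₀⟩
  have hS'ne : S'.Nonempty := ⟨T₀, hSS' ⟨hT₀le, hT₀⟩⟩
  have hnonneg : ∀ T ∈ S', 0 ≤ treeWeight T w := by
    intro T hT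
    refine Finset.sum_nonneg fun e heT => ?_
    rw [Set.Finite.mem_toFinset] at heT
    exact (hw' e (SimpleGraph.edgeSet_mono hT.1 heT)).1
  have hbdd' : BddBelow ((fun T => treeWeight T w) '' S') := by
    refine ⟨0, ?_⟩
    rintro r ⟨T, hT, rfl⟩
    exact hnonneg T hT
  have hbdd : BddBelow ((fun T => treeWeight T w) '' S) :=
    hbdd'.mono (Set.image_mono hSS')
  -- first inequality
  have h1 : mstWeight G' w ≤ mstWeight G w := by
    rw [mstWeight, mstWeight]
    exact csInf_le_csInf hbdd' (hSne.image _) (Set.image_mono hSS')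
  -- minimizer over G'
  haveI : Finite (SimpleGraph V) :=
    Finite.of_injective (fun (H : SimpleGraph V) => H.Adj)
      (fun _ _ h => SimpleGraph.ext h)
  have hfin : ((fun T => treeWeight T w) '' S').Finite := (Set.toFinite S').image _
  have hmem : mstWeight G' w ∈ (fun T => treeWeight T w) '' S' :=
    (hS'ne.image _).csInf_mem hfin
  obtain ⟨T', ⟨hT'le, hT'tree⟩, hT'w0⟩ := hmem
  have hT'w : treeWeight T' w = mstWeight G' w := hT'w0
  -- second inequality: find a spanning tree of G of weight ≤ treeWeight T' + B
  have h2 : mstWeight G w ≤ mstWeight G' w + B := by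
    by_cases he0 : s(u,v) ∈ T'.edgeSet
    · -- exchange argument
      set F := T' \ SimpleGraph.fromEdgeSet {s(u,v)} with hF
      have hFE : F.edgeSet = T'.edgeSet \ {s(u,v)} := by
        rw [hF, SimpleGraph.edgeSet_sdiff, SimpleGraph.edgeSet_fromEdgeSet,
          SimpleGraph.edgeSet_sdiff_sdiff_isDiag]
      have hFleT' : F ≤ T' := sdiff_le
      have hFleG : F ≤ G := by
        intro a b hab
        rw [SimpleGraph.sdiff_adj, SimpleGraph.fromEdgeSet_adj] at hab
        rcases hT'le hab.1 with h | h
        · exact h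
        · rw [SimpleGraph.fromEdgeSet_adj] at h
          exact absurd ⟨h.1, h.2⟩ hab.2
      have hT'adj : T'.Adj u v := (SimpleGraph.mem_edgeSet T').mp he0
      have hbr : ¬ F.Reachable u v :=
        ((SimpleGraph.isBridge_iff).mp
          (SimpleGraph.isAcyclic_iff_forall_adj_isBridge.mp hT'tree.2 hT'adj))
      have hsplit : ∀ z : V, F.Reachable z u ∨ F.Reachable z v :=
        fun z => aux_reach_endpoint hT'tree.1.preconnected z
      -- crossing edge
      obtain ⟨x, y, hxy, hux, huy⟩ :=
        aux_exists_cross (hconn.preconnected u v).some (SimpleGraph.Reachable.refl u)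
          (fun h => hbr h)
      have hxyne : x ≠ y := fun h => huy (h ▸ hux)
      have hnrxy : ¬ F.Reachable x y := fun h => huy (hux.trans h)
      set T := F ⊔ SimpleGraph.fromEdgeSet {s(x,y)} with hT
      have hxyF : s(x,y) ∉ F.edgeSet := fun h => hnrxy (SimpleGraph.Adj.reachable h)
      have hTE : T.edgeSet = insert s(x,y) F.edgeSet := by
        rw [hT, SimpleGraph.edgeSet_sup, SimpleGraph.edgeSet_fromEdgeSet]
        have : ({s(x,y)} : Set (Sym2 V)) \ Sym2.diagSet = {s(x,y)} := by
          ext e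
          simp only [Set.mem_diff, Set.mem_singleton_iff, Set.mem_setOf_eq, Sym2.mem_diagSet]
          constructor
          · exact fun h => h.1
          · rintro rfl; exact ⟨rfl, by simp [Sym2.isDiag_iff_proj_eq, hxyne]⟩
        rw [this, Set.union_comm, Set.insert_eq]
      have hTleG : T ≤ G := by
        refine sup_le hFleG ?_
        intro a b hab
        rw [SimpleGraph.fromEdgeSet_adj, Set.mem_singleton_iff, Sym2.eq_iff] at hab
        rcases hab.1 with ⟨rfl, rfl⟩ | ⟨rfl, rfl⟩
        · exact hxy
        · exact hxy.symm
      have hTacyclic : T.IsAcyclic :=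
        aux_acyclic_add (aux_isAcyclic_mono hFleT' hT'tree.2) hxyne hnrxy
      have hFleT : F ≤ T := le_sup_left
      have hTadjxy : T.Adj x y :=
        Or.inr ((SimpleGraph.fromEdgeSet_adj _).mpr ⟨rfl, hxyne⟩)
      have hTuv : T.Reachable u v := by
        have hyv : F.Reachable y v := (hsplit y).resolve_left (fun h => huy h.symm)
        exact ((hux.mono hFleT).trans hTadjxy.reachable).trans (hyv.mono hFleT)
      have hTconn : T.Connected := by
        haveI : Nonempty V := hconn.nonempty
        refine SimpleGraph.Connected.mk fun a b => ?_
        have hau : T.Reachable a u := by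
          rcases hsplit a with h | h
          · exact h.mono hFleT
          · exact (h.mono hFleT).trans hTuv.symm
        have hbu : T.Reachable b u := by
          rcases hsplit b with h | h
          · exact h.mono hFleT
          · exact (h.mono hFleT).trans hTuv.symm
        exact hau.trans hbu.symm
      -- weights
      have hwT' : treeWeight T' w = w s(u,v) + treeWeight F w := by
        have hfs : (Set.toFinite F.edgeSet).toFinset =
            (Set.toFinite T'.edgeSet).toFinset.erase s(u,v) := by
          ext e
          simp only [Set.Finite.mem_toFinset, Finset.mem_erase, hFE, Set.mem_diff,
            Set.mem_singleton_iff]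
          tauto
        rw [treeWeight, treeWeight, hfs,
          Finset.add_sum_erase _ w (by rw [Set.Finite.mem_toFinset]; exact he0)]
      have hwT : treeWeight T w = w s(x,y) + treeWeight F w := by
        have hfs : (Set.toFinite T.edgeSet).toFinset =
            insert s(x,y) (Set.toFinite F.edgeSet).toFinset := by
          ext e
          simp only [Set.Finite.mem_toFinset, Finset.mem_insert, hTE, Set.mem_insert_iff]
        rw [treeWeight, treeWeight, hfs,
          Finset.sum_insert (by rw [Set.Finite.mem_toFinset]; exact hxyF)]
      have hwxyB : w s(x,y) ≤ B := (hw _ ((SimpleGraph.mem_edgeSet G).mpr hxy)).2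
      have hTweight : treeWeight T w ≤ treeWeight T' w + B := by
        rw [hwT, hwT']
        have := hwe.1
        linarith
      have hmle : mstWeight G w ≤ treeWeight T w := by
        rw [mstWeight]
        exact csInf_le hbdd ⟨T, ⟨hTleG, hTconn, hTacyclic⟩, rfl⟩
      calc mstWeight G w ≤ treeWeight T w := hmle
        _ ≤ treeWeight T' w + B := hTweight
        _ = mstWeight G' w + B := by rw [hT'w]
    · -- T' is already a spanning tree of G
      have hT'G : T' ≤ G := by
        intro a b hab
        rcases hT'le hab with h | h
        · exact h
        · rw [SimpleGraph.fromEdgeSet_adj, Set.mem_singleton_iff] at h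
          exact absurd (h.1 ▸ (SimpleGraph.mem_edgeSet T').mpr hab) he0
      have hmle : mstWeight G w ≤ treeWeight T' w := by
        rw [mstWeight]
        exact csInf_le hbdd ⟨T', ⟨hT'G, hT'tree⟩, rfl⟩
      rw [hT'w] at hmle
      linarith
  exact ⟨by linarith, by linarith⟩
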